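/- Let X be a Banach space and Y a Hilbert space, A : X → Y bounded linear, and R : X → (-∞,∞] proper, lsc, strongly convex with modulus σ > 0. If x satisfies A*λ ∈ ∂R(x) for some λ ∈ Y, set d_y(μ) := R*(A*μ) - ⟨μ, y⟩. If x† satisfies A*λ† ∈ ∂R(x†) and A x† = y, then for x_n = ∇R*(A*λ_n) the Bregman distance satisfies D_R^{A*λ_n}(x†, x_n) = d_y(λ_n) - d_y(λ†), and consequently σ·‖x_n - x†‖² ≤ d_y(λ_n) - d_y(λ†). -/

import Mathlib

/-- The Legendre–Fenchel conjugate of `f`, as a function on the dual space. -/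
noncomputable def fenchelConj {X : Type*} [NormedAddCommGroup X] [NormedSpace ℝ X]
    (f : X → EReal) (ξ : X →L[ℝ] ℝ) : EReal :=
  ⨆ x : X, ((ξ x : ℝ) : EReal) - f x

/-- The adjoint `A* λ ∈ X*` of a bounded operator `A : X → Y` into a Hilbert space,
given by `x ↦ ⟪λ, A x⟫`. -/
noncomputable def adjointFun {X Y : Type*} [NormedAddCommGroup X] [NormedSpace ℝ X]
    [NormedAddCommGroup Y] [InnerProductSpace ℝ Y] (A : X →L[ℝ] Y) (lam : Y) :
    X →L[ℝ] ℝ :=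
  (innerSL ℝ lam).comp A

/-- The dual objective `d_y(λ) = R*(A*λ) - ⟨λ, y⟩`. -/
noncomputable def dualObj {X Y : Type*} [NormedAddCommGroup X] [NormedSpace ℝ X]
    [NormedAddCommGroup Y] [InnerProductSpace ℝ Y] (R : X → EReal) (A : X →L[ℝ] Y)
    (y lam : Y) : EReal :=
  fenchelConj R (adjointFun A lam) - ((inner ℝ lam y : ℝ) : EReal)

/-- Fenchel equality: if `ξ` is a subgradient of `R` at `x0` where `R x0 = r` is finite,
then `fenchelConj R ξ = ξ x0 - r`. -/
lemma conj_eq_of_subgrad {X : Type*} [NormedAddCommGroup X] [NormedSpace ℝ X]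
    (R : X → EReal) (hnobot : ∀ x, R x ≠ ⊥) (ξ : X →L[ℝ] ℝ) (x0 : X) (r : ℝ)
    (hr : R x0 = (r : ℝ))
    (hsub : ∀ z : X, R x0 + ((ξ (z - x0) : ℝ) : EReal) ≤ R z) :
    fenchelConj R ξ = ((ξ x0 - r : ℝ) : EReal) := by
  apply le_antisymm
  · apply iSup_le
    intro x
    by_cases htop : R x = ⊤
    · rw [htop, EReal.sub_top]; exact bot_le
    · have hx := hsub x
      rw [hr] at hx
      lift R x to ℝ using ⟨htop, hnobot x⟩ with s hs
      rw [← EReal.coe_add] at hx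
      rw [← EReal.coe_sub, EReal.coe_le_coe_iff]
      have := EReal.coe_le_coe_iff.mp hx
      have hmap : ξ (x - x0) = ξ x - ξ x0 := map_sub ξ x x0
      linarith [hmap ▸ this]
  · have : ((ξ x0 - r : ℝ) : EReal) = ((ξ x0 : ℝ) : EReal) - R x0 := by
      rw [hr, ← EReal.coe_sub]
    rw [this]
    exact le_iSup (fun x => ((ξ x : ℝ) : EReal) - R x) x0
theorem stmt_9 {X Y : Type*} [NormedAddCommGroup X] [NormedSpace ℝ X] [CompleteSpace X]
    [NormedAddCommGroup Y] [InnerProductSpace ℝ Y] [CompleteSpace Y]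
    (A : X →L[ℝ] Y) (R : X → EReal) (σ : ℝ) (hσ : 0 < σ)
    (hproper : ∃ x, R x ≠ ⊤) (hnobot : ∀ x, R x ≠ ⊥)
    (hlsc : LowerSemicontinuous R)
    (hsc : ∀ u v : X, R u ≠ ⊤ → R v ≠ ⊤ → ∀ t : ℝ, 0 ≤ t → t ≤ 1 →
      R (t • u + (1 - t) • v) + ((σ * t * (1 - t) * ‖u - v‖ ^ 2 : ℝ) : EReal)
        ≤ (t : EReal) * R u + ((1 - t : ℝ) : EReal) * R v)
    (y : Y) (xdag : X) (lamdag : Y)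
    -- the source condition `A* λ† ∈ ∂R(x†)`
    (hsource : ∀ z : X, R xdag + ((adjointFun A lamdag (z - xdag) : ℝ) : EReal) ≤ R z)
    (hsol : A xdag = y)
    (lamn : Y) (xn : X)
    -- `xn = ∇R*(A* λn)`, i.e. `A* λn ∈ ∂R(xn)`
    (hxn : ∀ z : X, R xn + ((adjointFun A lamn (z - xn) : ℝ) : EReal) ≤ R z) :
    R xdag - R xn - ((adjointFun A lamn (xdag - xn) : ℝ) : EReal)
        = dualObj R A y lamn - dualObj R A y lamdag ∧
      ((σ * ‖xn - xdag‖ ^ 2 : ℝ) : EReal) ≤ dualObj R A y lamn - dualObj R A y lamdag := by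
  obtain ⟨x0, hx0⟩ := hproper
  have hxnT : R xn ≠ ⊤ := by
    intro h
    have := hxn x0
    rw [h, EReal.top_add_coe] at this
    exact hx0 (top_le_iff.mp this)
  have hxdT : R xdag ≠ ⊤ := by
    intro h
    have := hsource x0
    rw [h, EReal.top_add_coe] at this
    exact hx0 (top_le_iff.mp this)
  set rn := (R xn).toReal with hrn_def
  set rd := (R xdag).toReal with hrd_def
  have hrn : R xn = (rn : ℝ) := (EReal.coe_toReal hxnT (hnobot xn)).symm
  have hrd : R xdag = (rd : ℝ) := (EReal.coe_toReal hxdT (hnobot xdag)).symm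
  have hcn := conj_eq_of_subgrad R hnobot (adjointFun A lamn) xn rn hrn hxn
  have hcd := conj_eq_of_subgrad R hnobot (adjointFun A lamdag) xdag rd hrd hsource
  have hinner : ∀ μ : Y, (inner ℝ μ y : ℝ) = adjointFun A μ xdag := by
    intro μ
    simp [adjointFun, ← hsol]
  have dn : dualObj R A y lamn
      = ((adjointFun A lamn xn - rn - adjointFun A lamn xdag : ℝ) : EReal) := by
    rw [dualObj, hcn, hinner lamn, ← EReal.coe_sub]
  have dd : dualObj R A y lamdag = ((-rd : ℝ) : EReal) := by
    rw [dualObj, hcd, hinner lamdag, ← EReal.coe_sub]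
    norm_num
  have diff : dualObj R A y lamn - dualObj R A y lamdag
      = ((adjointFun A lamn xn - rn - adjointFun A lamn xdag + rd : ℝ) : EReal) := by
    rw [dn, dd, ← EReal.coe_sub]
    norm_num
  constructor
  · rw [hrn, hrd, diff, map_sub]
    norm_cast
    ring
  · -- strong convexity estimate
    set c := ‖xdag - xn‖ ^ 2 with hc_def
    have hc : 0 ≤ c := sq_nonneg _
    set p := adjointFun A lamn xdag - adjointFun A lamn xn with hp_def
    have hstep : ∀ t : ℝ, 0 < t → t ≤ 1 → rn + p + σ * (1 - t) * c ≤ rd := by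
      intro t ht0 ht1
      have h1 := hsc xdag xn hxdT hxnT t ht0.le ht1
      set z := t • xdag + (1 - t) • xn with hz_def
      have hz := hxn z
      have hzsub : z - xn = t • (xdag - xn) := by
        rw [hz_def]
        module
      have hξ : adjointFun A lamn (z - xn) = t * p := by
        rw [hzsub, map_smul, map_sub]
        simp [hp_def, smul_eq_mul]
      rw [hrn, hξ, ← EReal.coe_add] at hz
      rw [hrd, hrn, ← EReal.coe_mul, ← EReal.coe_mul, ← EReal.coe_add] at h1
      have hzT : R z ≠ ⊤ := by
        intro h
        rw [h, EReal.top_add_coe, top_le_iff] at h1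
        exact EReal.coe_ne_top _ h1
      lift R z to ℝ using ⟨hzT, hnobot z⟩ with s hs
      rw [← EReal.coe_add] at h1
      have hz' : rn + t * p ≤ s := EReal.coe_le_coe_iff.mp hz
      have h1' : s + σ * t * (1 - t) * c ≤ t * rd + (1 - t) * rn :=
        EReal.coe_le_coe_iff.mp h1
      have h3 : t * (rn + p + σ * (1 - t) * c) ≤ t * rd := by nlinarith
      exact le_of_mul_le_mul_left h3 ht0
    have key : σ * c ≤ rd - rn - p := by
      apply le_of_forall_pos_le_add
      intro ε hε
      set t := min 1 (ε / (σ * (c + 1))) with ht_def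
      have ht0 : 0 < t := lt_min one_pos (div_pos hε (by positivity))
      have ht1 : t ≤ 1 := min_le_left _ _
      have hst := hstep t ht0 ht1
      have htle : t ≤ ε / (σ * (c + 1)) := min_le_right _ _
      have h4 : t * (σ * (c + 1)) ≤ ε := (le_div_iff₀ (by positivity)).mp htle
      nlinarith [mul_nonneg (mul_nonneg hσ.le ht0.le) hc]
    rw [diff]
    apply EReal.coe_le_coe_iff.mpr
    rw [norm_sub_rev]
    have : ‖xdag - xn‖ ^ 2 = c := rfl
    rw [this]
    linarith
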